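/- (Engelking–Karłowicz theorem.) Let θ, μ, χ be cardinals with ℵ₀ ≤ θ⁻ ≤ μ and χ ≤ 2^μ, where θ⁻ := sup{ ν ∈ Card : ν < θ }. Then there exists a family 𝒢 ⊆ ^χ μ of functions with |𝒢| ≤ μ^{<θ} such that every function f : X → μ with X ∈ [χ]^{<θ} can be extended by some function in 𝒢. -/

import Mathlib

open Cardinal

/-- Auxiliary: bound on the number of subsets of `α` of size `< θ`. -/
theorem EK_mk_set_lt_le {α : Type u} (θ κ : Cardinal.{u}) (hκ : ℵ₀ ≤ κ) (hθκ : θ ≤ κ)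
    (h : ∀ ν < θ, max (Cardinal.mk α) ℵ₀ ^ ν ≤ κ) :
    Cardinal.mk {t : Set α // Cardinal.mk t < θ} ≤ κ := by
  classical
  set ν : θ.ord.ToType → Cardinal.{u} :=
    fun i => ((((Ordinal.ToType.mk (o := θ.ord))).symm i : Set.Iio θ.ord) : Ordinal).card with hνdef
  have hν : ∀ i, ν i < θ := by
    intro i
    exact Cardinal.lt_ord.1 (((Ordinal.ToType.mk (o := θ.ord))).symm i).2
  -- the injection
  have key : ∀ t : {t : Set α // Cardinal.mk t < θ},
      ∃ i : θ.ord.ToType, Cardinal.mk t.1 ≤ ν i := by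
    intro t
    have h1 : (Cardinal.mk t.1).ord < θ.ord := Cardinal.ord_lt_ord.2 t.2
    refine ⟨(Ordinal.ToType.mk (o := θ.ord)) ⟨(Cardinal.mk t.1).ord, h1⟩, ?_⟩
    have h2 : ν ((Ordinal.ToType.mk (o := θ.ord)) ⟨(Cardinal.mk t.1).ord, h1⟩)
        = Cardinal.mk t.1 := by
      rw [hνdef]
      simp only [OrderIso.symm_apply_apply, Cardinal.card_ord]
    rw [h2]
  set F : {t : Set α // Cardinal.mk t < θ} →
      Σ i : θ.ord.ToType, {t : Set α // Cardinal.mk t ≤ ν i} :=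
    fun t => ⟨(key t).choose, ⟨t.1, (key t).choose_spec⟩⟩ with hF
  have hFinj : Function.Injective F := by
    intro a b hab
    have : ((F a).2 : Set α) = ((F b).2 : Set α) := by
      exact congrArg (fun p => (p.2 : Set α)) hab
    exact Subtype.ext this
  calc Cardinal.mk {t : Set α // Cardinal.mk t < θ}
      ≤ Cardinal.mk (Σ i : θ.ord.ToType, {t : Set α // Cardinal.mk t ≤ ν i}) :=
        Cardinal.mk_le_of_injective hFinj
    _ = Cardinal.sum fun i => Cardinal.mk {t : Set α // Cardinal.mk t ≤ ν i} :=
        Cardinal.mk_sigma _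
    _ ≤ Cardinal.sum fun _ : θ.ord.ToType => κ := by
        refine Cardinal.sum_le_sum _ _ fun i => ?_
        exact (Cardinal.mk_bounded_set_le α (ν i)).trans (h (ν i) (hν i))
    _ = Cardinal.mk θ.ord.ToType * κ := Cardinal.sum_const' θ.ord.ToType κ
    _ = θ * κ := by rw [Cardinal.mk_toType, Cardinal.card_ord]
    _ ≤ κ * κ := mul_le_mul_left hθκ κ
    _ = κ := Cardinal.mul_eq_self hκ

/-- Engelking–Karłowicz theorem: if `ℵ₀ ≤ θ⁻ ≤ μ` and `χ ≤ 2^μ` (where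
`θ⁻ = sup{ ν : ν < θ }`, `μ = #Y`, `χ = #X`), then there is a family
`𝒢 ⊆ ^χ μ` of functions with `|𝒢| ≤ μ^{<θ}` such that every function on a
subset of `X` of size `< θ` into `Y` extends to a member of `𝒢`. -/
theorem stmt13 {X Y : Type u} (θ : Cardinal.{u})
    (hθ : ℵ₀ ≤ sSup {ν : Cardinal.{u} | ν < θ})
    (hμ : sSup {ν : Cardinal.{u} | ν < θ} ≤ Cardinal.mk Y)
    (hχ : Cardinal.mk X ≤ 2 ^ Cardinal.mk Y) :
    ∃ G : Set (X → Y), Cardinal.mk ↥G ≤ Cardinal.powerlt (Cardinal.mk Y) θ ∧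
      ∀ s : Set X, Cardinal.mk ↥s < θ →
        ∀ f : X → Y, ∃ g ∈ G, ∀ x ∈ s, g x = f x := by
  classical
  set μ := Cardinal.mk Y with hμdef
  set κ := Cardinal.powerlt μ θ with hκdef
  -- basic facts
  have hθ0 : 0 < θ := by
    rcases eq_or_ne θ 0 with rfl | h
    · exfalso
      have h0 : {ν : Cardinal.{u} | ν < 0} = ∅ := by simp
      rw [h0, csSup_empty] at hθ
      exact Cardinal.aleph0_pos.not_ge hθ
    · exact (Cardinal.zero_le θ).lt_of_ne (Ne.symm h)
  have hsupθ : sSup {ν : Cardinal.{u} | ν < θ} ≤ θ :=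
    csSup_le ⟨0, hθ0⟩ fun ν hν => hν.le
  have hℵθ : ℵ₀ ≤ θ := hθ.trans hsupθ
  have hμinf : ℵ₀ ≤ μ := hθ.trans hμ
  have hνμ : ∀ ν < θ, ν ≤ μ := fun ν hν =>
    (le_csSup ⟨θ, fun _ hx => le_of_lt hx⟩ hν).trans hμ
  have hμκ : μ ≤ κ := by
    have := Cardinal.le_powerlt (b := θ) μ (lt_of_lt_of_le Cardinal.one_lt_aleph0 hℵθ)
    rwa [Cardinal.power_one] at this
  have hκinf : ℵ₀ ≤ κ := hμinf.trans hμκ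
  have hθκ : θ ≤ κ := by
    rcases le_or_gt θ μ with h | h
    · exact h.trans hμκ
    · have h1 : θ ≤ Order.succ μ := by
        by_contra h2
        push_neg at h2
        exact absurd (hνμ _ h2) (Order.lt_succ μ).not_ge
      have h2 : Order.succ μ ≤ 2 ^ μ := Order.succ_le_of_lt (Cardinal.cantor μ)
      have h3 : (2 : Cardinal) ^ μ ≤ μ ^ μ :=
        Cardinal.power_le_power_right ((Cardinal.nat_lt_aleph0 2).le.trans hμinf)
      exact h1.trans (h2.trans (h3.trans (Cardinal.le_powerlt μ h)))
  have hY : Nonempty Y :=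
    Cardinal.mk_ne_zero_iff.1 (Cardinal.aleph0_pos.trans_le hμinf).ne'
  obtain ⟨y₀⟩ := hY
  -- embedding of X into Set Y
  have hXS : Cardinal.mk X ≤ Cardinal.mk (Set Y) := by rwa [Cardinal.mk_set]
  obtain ⟨e⟩ := (Cardinal.le_def X (Set Y)).1 hXS
  -- codes
  set C := Σ w : {w : Set Y // Cardinal.mk w < θ},
      Σ A : {A : Set (Set ↥w.1) // Cardinal.mk A < θ}, (↥A.1 → Y) with hC
  set g : C → X → Y := fun c x =>
    if h : (Subtype.val ⁻¹' (e x) : Set ↥c.1.1) ∈ c.2.1.1 then c.2.2 ⟨_, h⟩ else y₀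
    with hg
  refine ⟨Set.range g, ?_, ?_⟩
  · -- cardinality bound
    refine Cardinal.mk_range_le.trans ?_
    have hw : Cardinal.mk {w : Set Y // Cardinal.mk w < θ} ≤ κ := by
      refine EK_mk_set_lt_le θ κ hκinf hθκ fun ν hν => ?_
      rw [max_eq_left hμinf]
      exact Cardinal.le_powerlt μ hν
    have hA : ∀ w : {w : Set Y // Cardinal.mk w < θ},
        Cardinal.mk {A : Set (Set ↥w.1) // Cardinal.mk A < θ} ≤ κ := by
      intro w
      refine EK_mk_set_lt_le θ κ hκinf hθκ fun ν hν => ?_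
      have hb : max (Cardinal.mk (Set ↥w.1)) ℵ₀ ≤ μ ^ (Cardinal.mk ↥w.1 + 1) := by
        refine max_le ?_ ?_
        · rw [Cardinal.mk_set]
          refine (Cardinal.power_le_power_right
            ((Cardinal.nat_lt_aleph0 2).le.trans hμinf)).trans ?_
          exact Cardinal.power_le_power_left ((Cardinal.aleph0_pos.trans_le hμinf).ne') (self_le_add_right _ _)
        · refine hμinf.trans ?_
          have := Cardinal.power_le_power_left (a := μ) (b := 1)
            (c := Cardinal.mk ↥w.1 + 1) ((Cardinal.aleph0_pos.trans_le hμinf).ne') (by simp)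
          rwa [Cardinal.power_one] at this
      refine (Cardinal.power_le_power_right hb).trans ?_
      rw [← Cardinal.power_mul]
      refine Cardinal.le_powerlt μ ?_
      refine Cardinal.mul_lt_of_lt hℵθ ?_ hν
      exact Cardinal.add_lt_of_lt hℵθ w.2 (lt_of_lt_of_le Cardinal.one_lt_aleph0 hℵθ)
    calc Cardinal.mk C
        = Cardinal.sum fun w : {w : Set Y // Cardinal.mk w < θ} =>
            Cardinal.mk (Σ A : {A : Set (Set ↥w.1) // Cardinal.mk A < θ}, (↥A.1 → Y)) :=
          Cardinal.mk_sigma _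
      _ ≤ Cardinal.sum fun _ : {w : Set Y // Cardinal.mk w < θ} => κ := by
          refine Cardinal.sum_le_sum _ _ fun w => ?_
          calc Cardinal.mk (Σ A : {A : Set (Set ↥w.1) // Cardinal.mk A < θ}, (↥A.1 → Y))
              = Cardinal.sum fun A : {A : Set (Set ↥w.1) // Cardinal.mk A < θ} =>
                  Cardinal.mk (↥A.1 → Y) := Cardinal.mk_sigma _
            _ ≤ Cardinal.sum fun _ : {A : Set (Set ↥w.1) // Cardinal.mk A < θ} => κ := by
                refine Cardinal.sum_le_sum _ _ fun A => ?_
                rw [← Cardinal.power_def]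
                exact Cardinal.le_powerlt μ A.2
            _ = Cardinal.mk {A : Set (Set ↥w.1) // Cardinal.mk A < θ} * κ :=
                Cardinal.sum_const' _ κ
            _ ≤ κ * κ := mul_le_mul_left (hA w) κ
            _ = κ := Cardinal.mul_eq_self hκinf
      _ = Cardinal.mk {w : Set Y // Cardinal.mk w < θ} * κ := Cardinal.sum_const' _ κ
      _ ≤ κ * κ := mul_le_mul_left hw κ
      _ = κ := Cardinal.mul_eq_self hκinf
  · -- extension property
    intro s hs f
    -- separating set
    have key : ∀ a b : X, e a ≠ e b → ∃ y, ¬(y ∈ e a ↔ y ∈ e b) := by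
      intro a b hab
      by_contra h
      push_neg at h
      exact hab (Set.ext h)
    set d : ↥s × ↥s → Y := fun p =>
      if h : e ↑p.1 = e ↑p.2 then y₀ else (key _ _ h).choose with hd
    set w : Set Y := Set.range d with hwdef
    have hw : Cardinal.mk ↥w < θ := by
      refine Cardinal.mk_range_le.trans_lt ?_
      have h2 : Cardinal.mk (↥s × ↥s) = Cardinal.mk ↥s * Cardinal.mk ↥s := by
        rw [Cardinal.mk_prod]; simp
      rw [h2]
      exact Cardinal.mul_lt_of_lt hℵθ hs hs
    set F : ↥s → Set ↥w := fun z => Subtype.val ⁻¹' (e ↑z) with hFdef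
    have hFinj : ∀ z z' : ↥s, F z = F z' → (z : X) = ↑z' := by
      intro z z' hzz
      by_cases hee : e ↑z = e ↑z'
      · exact e.injective hee
      · exfalso
        have hy : d (z, z') ∈ w := Set.mem_range_self _
        have hspec : ¬(d (z, z') ∈ e ↑z ↔ d (z, z') ∈ e ↑z') := by
          have : d (z, z') = (key (↑z) (↑z') hee).choose := by
            rw [hd]; exact dif_neg hee
          rw [this]
          exact (key (↑z) (↑z') hee).choose_spec
        exact hspec (Set.ext_iff.1 hzz ⟨d (z, z'), hy⟩)
    set A : Set (Set ↥w) := Set.range F with hAdef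
    have hA : Cardinal.mk ↥A < θ := Cardinal.mk_range_le.trans_lt hs
    set τ : ↥A → Y := fun a => f ↑(a.2.choose) with hτ
    refine ⟨g ⟨⟨w, hw⟩, ⟨A, hA⟩, τ⟩, ⟨_, rfl⟩, ?_⟩
    intro x hx
    have hmem : (Subtype.val ⁻¹' (e x) : Set ↥w) ∈ A := ⟨⟨x, hx⟩, rfl⟩
    have : g ⟨⟨w, hw⟩, ⟨A, hA⟩, τ⟩ x = τ ⟨_, hmem⟩ := by
      rw [hg]
      exact dif_pos hmem
    rw [this, hτ]
    have hspec := hmem.choose_spec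
    have : (hmem.choose : X) = x := hFinj _ ⟨x, hx⟩ (by rw [hspec])
    simp only [this]
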